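/- arXiv:2505.13262 — 2 statements merged into one kernel-verified Lean document; each statement's English description precedes it below -/
import Mathlib

section
/- Let K be a number field and let h ∈ K[x] be a separable polynomial of degree 4. Then the set {α ∈ K : h(α) is not a square in K} is infinite. -/
open Polynomial NumberField IsDedekindDomain Multiplicative

open scoped Multiplicative

variable {K : Type} [Field K] [NumberField K]

/-- Scaling a polynomial with nonzero constant term to have constant term 1. -/
lemma QNS.exists_g (f : (𝓞 K)[X]) (hf : 1 ≤ f.natDegree) (hc : f.coeff 0 ≠ 0) :
    ∃ g : (𝓞 K)[X], 1 ≤ g.natDegree ∧ g.coeff 0 = 1 ∧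
      ∀ t, f.coeff 0 * g.eval t = f.eval (f.coeff 0 * t) := by
  have hfne0 : f ≠ 0 := fun h0 => by simp [h0] at hf
  set c := f.coeff 0 with hcdef
  set n := f.natDegree with hndef
  refine ⟨C 1 + ∑ i ∈ Finset.range n, C (f.coeff (i + 1) * c ^ i) * X ^ (i + 1), ?_, ?_, ?_⟩
  · -- degree ≥ 1 : coefficient at n is nonzero
    refine le_trans hf (le_natDegree_of_ne_zero ?_)
    rw [coeff_add, finset_sum_coeff]
    have hCn : (C (1 : 𝓞 K)).coeff n = 0 := by
      rw [coeff_C, if_neg (by omega)]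
    rw [hCn, zero_add]
    have hterm : ∀ i ∈ Finset.range n,
        (C (f.coeff (i + 1) * c ^ i) * X ^ (i + 1)).coeff n =
          if i = n - 1 then f.coeff n * c ^ (n - 1) else 0 := by
      intro i hi
      rw [Finset.mem_range] at hi
      rw [coeff_C_mul, coeff_X_pow]
      by_cases hieq : i = n - 1
      · subst hieq
        have hn1 : n - 1 + 1 = n := by omega
        rw [hn1]
        simp
      · rw [if_neg hieq, if_neg (by omega), mul_zero]
    rw [Finset.sum_congr rfl hterm, Finset.sum_ite_eq' (Finset.range n) (n - 1)]
    rw [if_pos (Finset.mem_range.mpr (by omega))]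
    exact mul_ne_zero (Polynomial.leadingCoeff_ne_zero.mpr hfne0) (pow_ne_zero _ hc)
  · -- constant coefficient is 1
    rw [coeff_add, finset_sum_coeff]
    have : ∀ i ∈ Finset.range n, (C (f.coeff (i + 1) * c ^ i) * X ^ (i + 1)).coeff 0 = 0 := by
      intro i _
      rw [coeff_C_mul, coeff_X_pow, if_neg (by omega), mul_zero]
    rw [Finset.sum_congr rfl this, Finset.sum_const_zero, coeff_C, if_pos rfl, add_zero]
  · -- evaluation identity
    intro t
    rw [eval_add, eval_C, eval_finset_sum]
    have hterm : ∀ i ∈ Finset.range n,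
        (C (f.coeff (i + 1) * c ^ i) * X ^ (i + 1)).eval t =
          f.coeff (i + 1) * c ^ i * t ^ (i + 1) := by
      intro i _
      rw [eval_mul, eval_C, eval_pow, eval_X]
    rw [Finset.sum_congr rfl hterm]
    have hr : f.eval (c * t) = ∑ i ∈ Finset.range (n + 1), f.coeff i * (c * t) ^ i := by
      rw [hndef]
      exact eval_eq_sum_range _
    rw [hr, Finset.sum_range_succ']
    rw [mul_add, mul_one, Finset.mul_sum]
    rw [pow_zero, mul_one, add_comm]
    congr 1
    refine Finset.sum_congr rfl (fun i _ => ?_)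
    ring

/-- A nonconstant polynomial over the ring of integers takes a nonzero nonunit value
on any given arithmetic progression. -/
lemma QNS.exists_nonunit_value (g : (𝓞 K)[X]) (hg : 1 ≤ g.natDegree) (M : 𝓞 K) (hM : M ≠ 0) :
    ∃ k : ℤ, ¬ IsUnit (g.eval (M * (k : 𝓞 K))) ∧ g.eval (M * (k : 𝓞 K)) ≠ 0 := by
  by_contra hcon
  push_neg at hcon
  -- every value has norm in {-1, 0, 1}
  have hnorm : ∀ k : ℤ, Algebra.norm ℤ (g.eval (M * (k : 𝓞 K))) = -1 ∨
      Algebra.norm ℤ (g.eval (M * (k : 𝓞 K))) = 0 ∨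
      Algebra.norm ℤ (g.eval (M * (k : 𝓞 K))) = 1 := by
    intro k
    by_cases hu : IsUnit (g.eval (M * (k : 𝓞 K)))
    · have h1 := NumberField.isUnit_iff_norm.mp hu
      rw [RingOfIntegers.coe_norm, ← Algebra.coe_norm_int] at h1
      have h2 : |Algebra.norm ℤ (g.eval (M * (k : 𝓞 K)))| = 1 := by
        have := h1
        rw [← Int.cast_abs] at this
        exact_mod_cast this
      rcases abs_eq (by norm_num : (0:ℤ) ≤ 1) |>.mp h2 with h | h
      · right; right; exact h
      · left; exact h
    · right; left
      rw [hcon k hu]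
      exact Algebra.norm_zero
  -- the complex polynomial given by the product of embeddings of g(M X)
  set gK : K[X] := g.map (algebraMap (𝓞 K) K) with hgK
  set q : K[X] := gK.comp (C (algebraMap (𝓞 K) K M) * X) with hqdef
  have hMK : algebraMap (𝓞 K) K M ≠ 0 := fun h0 =>
    hM (IsFractionRing.injective (𝓞 K) K (by rw [h0, map_zero]))
  have hgKdeg : gK.natDegree = g.natDegree :=
    natDegree_map_eq_of_injective (IsFractionRing.injective (𝓞 K) K) g
  have hqdeg : q.natDegree = g.natDegree := by
    rw [hqdef, natDegree_comp, natDegree_C_mul_X _ hMK, mul_one, hgKdeg]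
  have hqne : q ≠ 0 := by
    intro h0
    rw [h0, natDegree_zero] at hqdeg
    omega
  set Q : Polynomial ℂ := ∏ σ : K →ₐ[ℚ] ℂ, q.map (σ : K →+* ℂ) with hQdef
  -- evaluation of Q at integers
  have hQeval : ∀ k : ℤ, Q.eval ((k : ℤ) : ℂ) =
      ((Algebra.norm ℤ (g.eval (M * (k : 𝓞 K))) : ℤ) : ℂ) := by
    intro k
    have hq_eval : ∀ σ : K →ₐ[ℚ] ℂ, (q.map (σ : K →+* ℂ)).eval ((k : ℤ) : ℂ) =
        σ (algebraMap (𝓞 K) K (g.eval (M * (k : 𝓞 K)))) := by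
      intro σ
      have hk : ((k : ℤ) : ℂ) = (σ : K →+* ℂ) ((k : ℤ) : K) := by
        rw [map_intCast]
      have hinner : q.eval ((k : ℤ) : K) = algebraMap (𝓞 K) K (g.eval (M * (k : 𝓞 K))) := by
        rw [hqdef, eval_comp, eval_mul, eval_C, eval_X, hgK]
        have hmk : algebraMap (𝓞 K) K M * ((k : ℤ) : K) = algebraMap (𝓞 K) K (M * (k : 𝓞 K)) := by
          rw [map_mul, map_intCast]
        rw [hmk, eval_map, eval₂_at_apply]
      rw [hk, eval_map, eval₂_at_apply, hinner]
      rfl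
    rw [hQdef, eval_prod]
    rw [Finset.prod_congr rfl (fun σ _ => hq_eval σ)]
    have hnormeq := Algebra.norm_eq_prod_embeddings ℚ ℂ
      (algebraMap (𝓞 K) K (g.eval (M * (k : 𝓞 K))))
    rw [← hnormeq]
    rw [← Algebra.coe_norm_int]
    simp
  -- pigeonhole: one of the three values is attained infinitely often
  have hcover : (Set.univ : Set ℤ) ⊆
      {k : ℤ | Algebra.norm ℤ (g.eval (M * (k : 𝓞 K))) = -1} ∪
      ({k : ℤ | Algebra.norm ℤ (g.eval (M * (k : 𝓞 K))) = 0} ∪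
       {k : ℤ | Algebra.norm ℤ (g.eval (M * (k : 𝓞 K))) = 1}) := by
    intro k _
    rcases hnorm k with h | h | h
    · exact Or.inl h
    · exact Or.inr (Or.inl h)
    · exact Or.inr (Or.inr h)
  have hexists : ∃ c : ℤ, {k : ℤ | Algebra.norm ℤ (g.eval (M * (k : 𝓞 K))) = c}.Infinite := by
    by_contra hfin
    push_neg at hfin
    have : (Set.univ : Set ℤ).Finite :=
      Set.Finite.subset (((hfin (-1)).union ((hfin 0).union (hfin 1))) ) hcover
    exact Set.infinite_univ this
  obtain ⟨c, hcinf⟩ := hexists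
  -- then Q - C c has infinitely many roots, so Q = C c, contradicting deg Q ≥ 1
  have hroots : {x : ℂ | (Q - C ((c : ℤ) : ℂ)).IsRoot x}.Infinite := by
    refine Set.Infinite.mono ?_ (hcinf.image (fun a _ b _ hab => Int.cast_injective hab))
    rintro x ⟨k, hk, rfl⟩
    simp only [Set.mem_setOf_eq, IsRoot, eval_sub, eval_C]
    rw [hQeval k, hk]
    ring
  have hQC : Q = C ((c : ℤ) : ℂ) := by
    have := eq_zero_of_infinite_isRoot _ hroots
    have h2 : Q - C ((c : ℤ) : ℂ) = 0 := this
    linear_combination (norm := ring_nf) h2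
  have hdegQ : Q.natDegree = (Module.finrank ℚ K) * g.natDegree := by
    rw [hQdef, natDegree_prod _ _ (fun σ _ => map_ne_zero hqne)]
    rw [Finset.sum_congr rfl (fun σ _ => natDegree_map_eq_of_injective
      (RingHom.injective _) q)]
    rw [Finset.sum_const, smul_eq_mul, hqdeg, Finset.card_univ, AlgHom.card]
  have hrank : 1 ≤ Module.finrank ℚ K := Module.finrank_pos
  rw [hQC, natDegree_C] at hdegQ
  exact (Nat.mul_pos hrank hg).ne' hdegQ.symm

/-- There is a nonzero maximal ideal avoiding any fixed nonzero element. -/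
lemma QNS.exists_maximal_not_mem (m : 𝓞 K) (hm : m ≠ 0) :
    ∃ 𝔭 : Ideal (𝓞 K), 𝔭.IsMaximal ∧ 𝔭 ≠ ⊥ ∧ m ∉ 𝔭 := by
  set N := Ideal.absNorm (Ideal.span {m}) with hNdef
  have hN0 : N ≠ 0 := by
    rw [hNdef, ne_eq, Ideal.absNorm_eq_zero_iff, Ideal.span_singleton_eq_bot]
    exact hm
  obtain ⟨p, hpge, hp⟩ := Nat.exists_infinite_primes (N + 1)
  have hpN : ¬ (p ∣ N) := fun hd => by
    have := Nat.le_of_dvd (Nat.pos_of_ne_zero hN0) hd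
    omega
  have hrank : 0 < Module.finrank ℚ K := Module.finrank_pos
  -- the norm of (p : 𝓞 K)
  have hnormp : Algebra.norm ℤ ((p : ℕ) : 𝓞 K) = (p : ℤ) ^ Module.finrank ℚ K := by
    have : ((Algebra.norm ℤ ((p : ℕ) : 𝓞 K) : ℤ) : ℚ) =
        (((p : ℤ) ^ Module.finrank ℚ K : ℤ) : ℚ) := by
      rw [Algebra.coe_norm_int]
      have h1 : (((p : ℕ) : 𝓞 K) : K) = algebraMap ℚ K ((p : ℕ) : ℚ) := by
        push_cast
        simp
      rw [h1, Algebra.norm_algebraMap]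
      push_cast
      ring
    exact_mod_cast this
  have habs : Ideal.absNorm (Ideal.span {((p : ℕ) : 𝓞 K)}) = p ^ Module.finrank ℚ K := by
    rw [Ideal.absNorm_span_singleton, hnormp]
    rw [Int.natAbs_pow]
    simp
  have hptop : Ideal.span {((p : ℕ) : 𝓞 K)} ≠ ⊤ := by
    intro htop
    rw [htop] at habs
    rw [Ideal.absNorm_top] at habs
    have h2 : 1 < p ^ Module.finrank ℚ K := Nat.one_lt_pow hrank.ne' hp.two_le
    omega
  obtain ⟨𝔭, hmax, hle⟩ := Ideal.exists_le_maximal _ hptop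
  have hpmem : ((p : ℕ) : 𝓞 K) ∈ 𝔭 := hle (Ideal.subset_span rfl)
  refine ⟨𝔭, hmax, ?_, ?_⟩
  · intro hbot
    rw [hbot] at hpmem
    have hcast : ((p : ℕ) : 𝓞 K) = ((0 : ℕ) : 𝓞 K) := by simpa using hpmem
    have hp0 : p = 0 := Nat.cast_injective hcast
    have := hp.two_le
    omega
  · intro hmem
    have hne1 : Ideal.absNorm 𝔭 ≠ 1 := by
      rw [ne_eq, Ideal.absNorm_eq_one_iff]
      exact hmax.ne_top
    obtain ⟨qq, hqqprime, hqqdvd⟩ := Nat.exists_prime_and_dvd hne1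
    have hdvd1 : Ideal.absNorm 𝔭 ∣ p ^ Module.finrank ℚ K := by
      rw [← habs]
      exact Ideal.absNorm_dvd_absNorm_of_le ((Ideal.span_singleton_le_iff_mem _).mpr hpmem)
    have hdvd2 : Ideal.absNorm 𝔭 ∣ N := by
      rw [hNdef]
      exact Ideal.absNorm_dvd_absNorm_of_le ((Ideal.span_singleton_le_iff_mem _).mpr hmem)
    have hqqp : qq = p := by
      have := hqqprime.dvd_of_dvd_pow (hqqdvd.trans hdvd1)
      exact (Nat.prime_dvd_prime_iff_eq hqqprime hp).mp this
    exact hpN (hqqp ▸ (hqqdvd.trans hdvd2))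

/-- Euclid's argument: some prime avoiding `m` contains a value of `f`. -/
lemma QNS.exists_prime_root (f : (𝓞 K)[X]) (hf : 1 ≤ f.natDegree) (m : 𝓞 K) (hm : m ≠ 0) :
    ∃ 𝔭 : Ideal (𝓞 K), 𝔭.IsMaximal ∧ 𝔭 ≠ ⊥ ∧ m ∉ 𝔭 ∧ ∃ a, f.eval a ∈ 𝔭 := by
  by_cases hc : f.coeff 0 = 0
  · obtain ⟨𝔭, hmax, hbot, hnot⟩ := QNS.exists_maximal_not_mem m hm
    refine ⟨𝔭, hmax, hbot, hnot, 0, ?_⟩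
    rw [← coeff_zero_eq_eval_zero, hc]
    exact Ideal.zero_mem 𝔭
  · obtain ⟨g, hg1, hg0, hgeval⟩ := QNS.exists_g f hf hc
    obtain ⟨k, hku, hknz⟩ := QNS.exists_nonunit_value g hg1 m hm
    set z := g.eval (m * (k : 𝓞 K)) with hz
    have hztop : Ideal.span {z} ≠ ⊤ := by
      rw [ne_eq, Ideal.span_singleton_eq_top]
      exact hku
    obtain ⟨𝔭, hmax, hle⟩ := Ideal.exists_le_maximal _ hztop
    have hzmem : z ∈ 𝔭 := hle (Ideal.subset_span rfl)
    refine ⟨𝔭, hmax, ?_, ?_, f.coeff 0 * (m * (k : 𝓞 K)), ?_⟩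
    · intro hbot
      rw [hbot] at hzmem
      exact hknz hzmem
    · intro hmem
      have hdvd : (m * (k : 𝓞 K)) ∣ (z - 1) := by
        have h1 := Polynomial.sub_dvd_eval_sub (m * (k : 𝓞 K)) 0 g
        rw [sub_zero, ← coeff_zero_eq_eval_zero, hg0] at h1
        exact h1
      obtain ⟨w, hw⟩ := hdvd
      have hz1 : z - 1 ∈ 𝔭 := by
        rw [hw, mul_assoc]
        exact Ideal.mul_mem_right _ _ hmem
      have hone : (1 : 𝓞 K) ∈ 𝔭 := by
        have := Ideal.sub_mem 𝔭 hzmem hz1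
        simpa using this
      exact hmax.ne_top ((Ideal.eq_top_iff_one 𝔭).mpr hone)
    · rw [← hgeval (m * (k : 𝓞 K))]
      exact Ideal.mul_mem_left _ _ hzmem

lemma QNS.val_eval_le_one (v : HeightOneSpectrum (𝓞 K)) (p : K[X]) (x : K)
    (hc : ∀ i, v.valuation K (p.coeff i) ≤ 1) (hx : v.valuation K x ≤ 1) :
    v.valuation K (p.eval x) ≤ 1 := by
  rw [Polynomial.eval_eq_sum_range]
  refine Valuation.map_sum_le _ (fun i _ => ?_)
  rw [map_mul, map_pow]
  exact mul_le_one' (hc i) (pow_le_one' hx i)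

lemma QNS.taylor_coeff_le_one (v : HeightOneSpectrum (𝓞 K)) (p : K[X]) (x : K)
    (hc : ∀ i, v.valuation K (p.coeff i) ≤ 1) (hx : v.valuation K x ≤ 1) (k : ℕ) :
    v.valuation K ((taylor x p).coeff k) ≤ 1 := by
  rw [taylor_coeff]
  refine QNS.val_eval_le_one v _ x (fun i => ?_) hx
  rw [hasseDeriv_coeff, map_mul]
  have : ((((i + k).choose k : ℕ) : K)) = algebraMap (𝓞 K) K (((i + k).choose k : ℕ) : 𝓞 K) := by
    simp
  refine mul_le_one' ?_ (hc (i + k))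
  rw [this]
  exact v.valuation_le_one _

lemma QNS.taylor_decomp (p : K[X]) (a t : K) :
    p.eval (a + t) = p.eval a + p.derivative.eval a * t
      + t ^ 2 * ((taylor a p).divX.divX).eval t := by
  have e0 : p.eval (a + t) = (taylor a p).eval t := by
    rw [taylor_eval, add_comm]
  set q := taylor a p with hq
  have e1 : X * q.divX + C (q.coeff 0) = q := X_mul_divX_add q
  have e2 : X * q.divX.divX + C (q.divX.coeff 0) = q.divX := X_mul_divX_add _
  have c0 : q.coeff 0 = p.eval a := taylor_coeff_zero a p
  have c1 : q.divX.coeff 0 = p.derivative.eval a := by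
    rw [coeff_divX]; exact taylor_coeff_one a p
  rw [e0]
  conv_lhs => rw [← e1, ← e2]
  simp only [eval_add, eval_mul, eval_X, eval_C, c0, c1]
  ring

lemma QNS.deriv_coeff_le_one (v : HeightOneSpectrum (𝓞 K)) (p : K[X])
    (hc : ∀ i, v.valuation K (p.coeff i) ≤ 1) (i : ℕ) :
    v.valuation K (p.derivative.coeff i) ≤ 1 := by
  rw [coeff_derivative, map_mul]
  refine mul_le_one' (hc (i + 1)) ?_
  have : ((i : K) + 1) = algebraMap (𝓞 K) K ((i : 𝓞 K) + 1) := by simp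
  rw [this]
  exact v.valuation_le_one _

/-- Core lemma: if `h` has `v`-integral coefficients, and at some integral point `a`
its value is in the maximal ideal while its derivative is a unit, then there are
infinitely many points where `h` takes value of valuation exactly `ofAdd (-1)`. -/
lemma QNS.core (v : HeightOneSpectrum (𝓞 K)) (h : Polynomial K) (a : K)
    (hint : ∀ i, v.valuation K (h.coeff i) ≤ 1) (hva : v.valuation K a ≤ 1)
    (h1 : v.valuation K (h.eval a) < 1)
    (h2 : v.valuation K (h.derivative.eval a) = 1) :
    {α : K | v.valuation K (h.eval α) = ((ofAdd (-1 : ℤ) : Multiplicative ℤ) : WithZero (Multiplicative ℤ))}.Infinite := by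
  obtain ⟨π₀, hπ₀⟩ := v.intValuation_exists_uniformizer
  set π : K := algebraMap (𝓞 K) K π₀ with hπdef
  have hπ : v.valuation K π = ((ofAdd (-1 : ℤ) : Multiplicative ℤ) : WithZero (Multiplicative ℤ)) := by
    rw [hπdef, v.valuation_of_algebraMap]
    exact hπ₀
  have hm1lt : ((ofAdd (-1 : ℤ) : Multiplicative ℤ) : WithZero (Multiplicative ℤ)) < 1 := by
    rw [← WithZero.coe_one, WithZero.coe_lt_coe]
    exact Multiplicative.ofAdd_lt.mpr (by norm_num)
  have hπle : v.valuation K π ≤ 1 := hπ.le.trans hm1lt.le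
  have hπne : π ≠ 0 := by
    intro h0
    rw [h0, map_zero] at hπ
    exact WithZero.zero_ne_coe hπ
  have hint' : ∀ i, v.valuation K (h.derivative.coeff i) ≤ 1 := QNS.deriv_coeff_le_one v h hint
  have hlt2 : ∀ x : WithZero (Multiplicative ℤ), x < 1 → x ≠ ((ofAdd (-1 : ℤ) : Multiplicative ℤ) : WithZero (Multiplicative ℤ)) →
      x < ((ofAdd (-1 : ℤ) : Multiplicative ℤ) : WithZero (Multiplicative ℤ)) := by
    intro x hx hne
    rcases eq_or_ne x 0 with rfl | h0
    · exact WithZero.zero_lt_coe _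
    · obtain ⟨u, hu⟩ := WithZero.ne_zero_iff_exists.mp h0
      rw [← hu] at hx hne ⊢
      rw [← WithZero.coe_one, WithZero.coe_lt_coe] at hx
      rw [WithZero.coe_lt_coe]
      rw [ne_eq, WithZero.coe_inj] at hne
      have h1 : u.toAdd < 0 := hx
      have h2 : u.toAdd ≠ -1 := fun hc => hne (by rw [← hc]; rfl)
      have : u.toAdd < -1 := by omega
      exact this
  -- find a point α with value exactly ofAdd (-1)
  have key : ∃ α : K, v.valuation K α ≤ 1 ∧
      v.valuation K (h.eval α) = ((ofAdd (-1 : ℤ) : Multiplicative ℤ) : WithZero (Multiplicative ℤ)) := by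
    by_cases hcase : v.valuation K (h.eval a) = ((ofAdd (-1 : ℤ) : Multiplicative ℤ) : WithZero (Multiplicative ℤ))
    · exact ⟨a, hva, hcase⟩
    · have hlt : v.valuation K (h.eval a) < ((ofAdd (-1 : ℤ) : Multiplicative ℤ) : WithZero (Multiplicative ℤ)) :=
        hlt2 _ h1 hcase
      refine ⟨a + π, Valuation.map_add_le _ hva hπle, ?_⟩
      rw [QNS.taylor_decomp h a π]
      have hmid : v.valuation K (h.derivative.eval a * π) =
          ((ofAdd (-1 : ℤ) : Multiplicative ℤ) : WithZero (Multiplicative ℤ)) := by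
        rw [map_mul, h2, hπ, one_mul]
      have hstep1 : v.valuation K (h.eval a + h.derivative.eval a * π) =
          ((ofAdd (-1 : ℤ) : Multiplicative ℤ) : WithZero (Multiplicative ℤ)) := by
        rw [Valuation.map_add_eq_of_lt_right _ (by rw [hmid]; exact hlt), hmid]
      have hrest : v.valuation K (π ^ 2 * ((taylor a h).divX.divX).eval π) <
          ((ofAdd (-1 : ℤ) : Multiplicative ℤ) : WithZero (Multiplicative ℤ)) := by
        have hr : v.valuation K (((taylor a h).divX.divX).eval π) ≤ 1 := by
          refine QNS.val_eval_le_one v _ π (fun i => ?_) hπle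
          rw [coeff_divX, coeff_divX]
          exact QNS.taylor_coeff_le_one v h a hint hva _
        have : v.valuation K (π ^ 2 * ((taylor a h).divX.divX).eval π) ≤
            v.valuation K π * v.valuation K π := by
          rw [map_mul, pow_two, map_mul, mul_assoc]
          exact mul_le_mul_right (mul_le_of_le_of_le_one le_rfl hr) _
        refine lt_of_le_of_lt this ?_
        rw [hπ, ← WithZero.coe_mul, WithZero.coe_lt_coe, ← ofAdd_add]
        exact Multiplicative.ofAdd_lt.mpr (by norm_num)
      rw [Valuation.map_add_eq_of_lt_left _ (by rw [hstep1]; exact hrest), hstep1]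
  obtain ⟨α, hαle, hα⟩ := key
  have main : ∀ β : 𝓞 K, v.valuation K (h.eval (α + π ^ 2 * algebraMap (𝓞 K) K β)) =
      ((ofAdd (-1 : ℤ) : Multiplicative ℤ) : WithZero (Multiplicative ℤ)) := by
    intro β
    set t : K := π ^ 2 * algebraMap (𝓞 K) K β with ht
    have hvt : v.valuation K t ≤ v.valuation K π * v.valuation K π := by
      rw [ht, map_mul, map_pow, pow_two]
      exact mul_le_of_le_of_le_one le_rfl (v.valuation_le_one β)
    have hvtlt : v.valuation K t < ((ofAdd (-1 : ℤ) : Multiplicative ℤ) : WithZero (Multiplicative ℤ)) := by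
      refine lt_of_le_of_lt hvt ?_
      rw [hπ, ← WithZero.coe_mul, WithZero.coe_lt_coe, ← ofAdd_add]
      exact Multiplicative.ofAdd_lt.mpr (by norm_num)
    have hvtle : v.valuation K t ≤ 1 := (hvtlt.trans hm1lt).le
    rw [QNS.taylor_decomp h α t]
    have hd : v.valuation K (h.derivative.eval α) ≤ 1 := QNS.val_eval_le_one v _ α hint' hαle
    have hmidlt : v.valuation K (h.derivative.eval α * t) <
        ((ofAdd (-1 : ℤ) : Multiplicative ℤ) : WithZero (Multiplicative ℤ)) := by
      rw [map_mul]
      exact lt_of_le_of_lt (mul_le_of_le_one_left' hd) hvtlt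
    have hrestlt : v.valuation K (t ^ 2 * ((taylor α h).divX.divX).eval t) <
        ((ofAdd (-1 : ℤ) : Multiplicative ℤ) : WithZero (Multiplicative ℤ)) := by
      have hr : v.valuation K (((taylor α h).divX.divX).eval t) ≤ 1 := by
        refine QNS.val_eval_le_one v _ t (fun i => ?_) hvtle
        rw [coeff_divX, coeff_divX]
        exact QNS.taylor_coeff_le_one v h α hint hαle _
      have hb : v.valuation K (t ^ 2 * ((taylor α h).divX.divX).eval t) ≤ v.valuation K t := by
        rw [map_mul, pow_two, map_mul, mul_assoc]
        exact mul_le_of_le_of_le_one le_rfl (mul_le_one' hvtle hr)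

      exact lt_of_le_of_lt hb hvtlt
    have hstep1 : v.valuation K (h.eval α + h.derivative.eval α * t) =
        ((ofAdd (-1 : ℤ) : Multiplicative ℤ) : WithZero (Multiplicative ℤ)) := by
      rw [Valuation.map_add_eq_of_lt_left _ (by rw [hα]; exact hmidlt), hα]
    rw [Valuation.map_add_eq_of_lt_left _ (by rw [hstep1]; exact hrestlt), hstep1]
  refine Set.infinite_of_injective_forall_mem
    (f := fun β : 𝓞 K => α + π ^ 2 * algebraMap (𝓞 K) K β) ?_ (fun β => main β)
  intro b1 b2 hb
  simp only [add_right_inj] at hb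
  have hπ2 : π ^ 2 ≠ 0 := pow_ne_zero _ hπne
  have := mul_left_cancel₀ hπ2 hb
  exact IsFractionRing.injective (𝓞 K) K this

lemma QNS.not_isSquare (v : HeightOneSpectrum (𝓞 K)) (x : K)
    (hx : v.valuation K x = ((ofAdd (-1 : ℤ) : Multiplicative ℤ) : WithZero (Multiplicative ℤ))) : ¬ IsSquare x := by
  rintro ⟨γ, rfl⟩
  rw [map_mul] at hx
  rcases eq_or_ne (v.valuation K γ) 0 with h0 | h0
  · rw [h0, mul_zero] at hx
    exact WithZero.zero_ne_coe hx
  · obtain ⟨u, hu⟩ := WithZero.ne_zero_iff_exists.mp h0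
    rw [← hu, ← WithZero.coe_mul, WithZero.coe_inj] at hx
    have h2 := congrArg Multiplicative.toAdd hx
    simp only [toAdd_mul, toAdd_ofAdd] at h2
    omega

/-- Let `K` be a number field and `h ∈ K[x]` a separable polynomial of
degree 4.  Then there are infinitely many `α ∈ K` for which `h(α)` is not a square in `K`. -/
theorem quartic_nonsquare_values_infinite
    (K : Type) [Field K] [NumberField K]
    (h : Polynomial K) (hsep : h.Separable) (hdeg : h.degree = 4) :
    {α : K | ¬ IsSquare (h.eval α)}.Infinite := by
  classical
  have hne : h ≠ 0 := fun h0 => by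
    rw [h0, degree_zero] at hdeg
    exact absurd hdeg (by decide)
  have hnatdeg : h.natDegree = 4 := natDegree_eq_of_degree_eq_some hdeg
  obtain ⟨u, w, huw⟩ := hsep
  set φ : 𝓞 K →+* K := algebraMap (𝓞 K) K with hφ
  have hφinj : Function.Injective φ := IsFractionRing.injective (𝓞 K) K
  have hex : ∀ p : Polynomial K, ∃ (q : (𝓞 K)[X]) (d : 𝓞 K), d ≠ 0 ∧
      q.map φ = Polynomial.C (φ d) * p := by
    intro p
    obtain ⟨b, hb⟩ := IsLocalization.integerNormalization_map_to_map (nonZeroDivisors (𝓞 K)) p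
    refine ⟨IsLocalization.integerNormalization (nonZeroDivisors (𝓞 K)) p, b,
      nonZeroDivisors.coe_ne_zero b, ?_⟩
    rw [hb]
    ext i
    rw [Polynomial.coeff_smul, coeff_C_mul, Algebra.smul_def]
  obtain ⟨F, d, hd, hF⟩ := hex h
  obtain ⟨U, du, hdu, hU⟩ := hex u
  obtain ⟨W, dw, hdw, hW⟩ := hex w
  set e : 𝓞 K := du * dw * d with hedef
  have he : e ≠ 0 := mul_ne_zero (mul_ne_zero hdu hdw) hd
  -- Bezout relation over the integers
  have hBez : C dw * U * F + C du * W * derivative F = C e := by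
    apply Polynomial.map_injective φ hφinj
    rw [Polynomial.map_add, Polynomial.map_mul, Polynomial.map_mul, Polynomial.map_mul,
      Polynomial.map_mul, map_C, map_C, ← Polynomial.derivative_map, hF, hU, hW,
      derivative_C_mul, map_C]
    have : (C (φ dw)) * (C (φ du) * u) * (C (φ d) * h) +
        (C (φ du)) * (C (φ dw) * w) * (C (φ d) * derivative h) =
        C (φ du) * C (φ dw) * C (φ d) * (u * h + w * derivative h) := by ring
    rw [this, huw, mul_one, ← map_mul, ← map_mul, ← map_mul, ← map_mul]
  -- degree of F
  have hFdeg : F.natDegree = 4 := by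
    have h1 : (F.map φ).natDegree = F.natDegree := natDegree_map_eq_of_injective hφinj F
    have h2 : (C (φ d) * h).natDegree = 4 := by
      rw [natDegree_C_mul (fun h0 => hd (hφinj (by rw [h0, map_zero]))), hnatdeg]
    rw [hF, h2] at h1
    omega
  -- Euclid: a prime avoiding e containing a value of F
  obtain ⟨𝔭, hmax, hbot, hemem, a, ha𝔭⟩ := QNS.exists_prime_root F (by omega) e he
  set v : HeightOneSpectrum (𝓞 K) := ⟨𝔭, hmax.isPrime, hbot⟩ with hv
  -- valuation facts
  have hvint : ∀ x : 𝓞 K, x ∈ 𝔭 ↔ v.valuation K (φ x) < 1 := by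
    intro x
    rw [v.valuation_lt_one_iff_dvd, Ideal.dvd_span_singleton]
  have hve : v.valuation K (φ e) = 1 := by
    rcases (v.valuation_le_one (K := K) e).lt_or_eq with hlt | heq
    · exact absurd ((hvint e).mpr hlt) hemem
    · exact heq
  have hmul_le_one : ∀ x : 𝓞 K, v.valuation K (φ x) ≤ 1 := fun x => v.valuation_le_one (K := K) x
  have hvd : v.valuation K (φ d) = 1 := by
    have hprod : v.valuation K (φ du) * v.valuation K (φ dw) * v.valuation K (φ d) = 1 := by
      rw [← map_mul, ← map_mul, ← map_mul, ← map_mul, ← hedef, hve]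
    refine le_antisymm (hmul_le_one d) ?_
    calc (1 : WithZero (Multiplicative ℤ)) = v.valuation K (φ du) * v.valuation K (φ dw) * v.valuation K (φ d) := hprod.symm
      _ ≤ 1 * 1 * v.valuation K (φ d) := by
          exact mul_le_mul' (mul_le_mul' (hmul_le_one du) (hmul_le_one dw)) le_rfl
      _ = v.valuation K (φ d) := by rw [one_mul, one_mul]
  -- coefficients of h are v-integral
  have hint : ∀ i, v.valuation K (h.coeff i) ≤ 1 := by
    intro i
    have hco : φ (F.coeff i) = φ d * h.coeff i := by
      have := congrArg (fun p => Polynomial.coeff p i) hF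
      simpa [coeff_map, coeff_C_mul] using this
    have h1 : v.valuation K (φ (F.coeff i)) ≤ 1 := hmul_le_one _
    rw [hco, map_mul, hvd, one_mul] at h1
    exact h1
  -- transfer evaluations
  have heval : ∀ (P : (𝓞 K)[X]) (x : 𝓞 K), (P.map φ).eval (φ x) = φ (P.eval x) := by
    intro P x
    rw [eval_map, eval₂_at_apply]
  have hFeval : φ (F.eval a) = φ d * h.eval (φ a) := by
    rw [← heval F a, hF, eval_mul, eval_C]
  have hF'eval : φ ((derivative F).eval a) = φ d * (derivative h).eval (φ a) := by
    rw [← heval (derivative F) a, ← Polynomial.derivative_map, hF, derivative_C_mul,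
      eval_mul, eval_C]
  have h1 : v.valuation K (h.eval (φ a)) < 1 := by
    have := (hvint _).mp ha𝔭
    rw [hFeval, map_mul, hvd, one_mul] at this
    exact this
  -- the derivative has valuation one at a
  have h2 : v.valuation K ((derivative h).eval (φ a)) = 1 := by
    have hBeval : dw * U.eval a * F.eval a + du * W.eval a * (derivative F).eval a = e := by
      have := congrArg (fun p => Polynomial.eval a p) hBez
      simpa [eval_add, eval_mul, eval_C] using this
    have hterm2 : φ (du * W.eval a * (derivative F).eval a) =
        φ e - φ (dw * U.eval a * F.eval a) := by
      rw [← map_sub, ← hBeval]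
      congr 1
      ring
    have hval1 : v.valuation K (φ (dw * U.eval a * F.eval a)) < 1 := by
      simp only [map_mul]
      have hlt := (hvint _).mp ha𝔭
      calc v.valuation K (φ dw) * v.valuation K (φ (U.eval a)) * v.valuation K (φ (F.eval a))
          ≤ 1 * 1 * v.valuation K (φ (F.eval a)) :=
            mul_le_mul' (mul_le_mul' (hmul_le_one dw) (hmul_le_one _)) le_rfl
        _ = v.valuation K (φ (F.eval a)) := by rw [one_mul, one_mul]
        _ < 1 := hlt
    have hval2 : v.valuation K (φ (du * W.eval a * (derivative F).eval a)) = 1 := by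
      rw [hterm2, sub_eq_add_neg]
      rw [Valuation.map_add_eq_of_lt_left _ (by rw [(v.valuation K).map_neg, hve]; exact hval1),
        hve]
    -- conclude each factor is a unit
    have hle : v.valuation K (φ ((derivative F).eval a)) = 1 := by
      simp only [map_mul] at hval2
      refine le_antisymm (hmul_le_one _) ?_
      calc (1 : WithZero (Multiplicative ℤ)) = v.valuation K (φ du) * v.valuation K (φ (W.eval a)) *
            v.valuation K (φ ((derivative F).eval a)) := hval2.symm
        _ ≤ 1 * 1 * v.valuation K (φ ((derivative F).eval a)) :=
            mul_le_mul' (mul_le_mul' (hmul_le_one du) (hmul_le_one _)) le_rfl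
        _ = v.valuation K (φ ((derivative F).eval a)) := by rw [one_mul, one_mul]
    rw [hF'eval, map_mul, hvd, one_mul] at hle
    exact hle
  have hcore := QNS.core v h (φ a) hint (hmul_le_one a) h1 h2
  refine hcore.mono ?_
  intro x hx
  exact QNS.not_isSquare v _ hx
end

section
/- Let p be a prime number and let F ∈ ℤ[x,y,z] be homogeneous of degree d ≥ 1. Suppose the reduction F̄ of F modulo p defines a smooth plane curve over 𝔽_p, i.e., there is no point (a,b,c) ≠ (0,0,0) with coordinates in an algebraic closure of 𝔽_p at which F̄ and all three partial derivatives of F̄ vanish. Then F, regarded as a polynomial over ℚ, also defines a smooth plane curve: there is no point (a,b,c) ≠ (0,0,0) with coordinates in an algebraic closure of ℚ at which F and all three partial derivatives of F vanish. -/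
open MvPolynomial

private lemma eval_smul_of_isHomogeneous {σ : Type*} [Fintype σ] {S : Type*} [CommRing S]
    {G : MvPolynomial σ S} {n : ℕ} (hG : G.IsHomogeneous n) (t : S) (x : σ → S) :
    MvPolynomial.eval (t • x) G = t ^ n * MvPolynomial.eval x G := by
  rw [MvPolynomial.eval_eq', MvPolynomial.eval_eq', Finset.mul_sum]
  refine Finset.sum_congr rfl fun d hd => ?_
  have hdeg : Finsupp.degree d = n := by
    by_contra h
    exact (MvPolynomial.mem_support_iff.mp hd) (hG.coeff_eq_zero h)
  have hsum : ∑ i : σ, d i = n := by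
    rw [← hdeg]
    exact (Finset.sum_subset (Finset.subset_univ _)
      (fun i _ hi => Finsupp.notMem_support_iff.mp hi)).symm
  have h1 : ∀ i : σ, (t • x) i ^ d i = t ^ d i * x i ^ d i := fun i => by
    simp [mul_pow]
  rw [Finset.prod_congr rfl fun i _ => h1 i, Finset.prod_mul_distrib,
    Finset.prod_pow_eq_pow_sum, hsum]
  ring

private lemma pderiv_isHomogeneous' {σ : Type*} [DecidableEq σ] {R : Type*} [CommRing R]
    {φ : MvPolynomial σ R} {n : ℕ} (hφ : φ.IsHomogeneous n) (i : σ) :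
    (MvPolynomial.pderiv i φ).IsHomogeneous (n - 1) := by
  have hrw : φ = ∑ d ∈ φ.support, MvPolynomial.monomial d (MvPolynomial.coeff d φ) :=
    (MvPolynomial.support_sum_monomial_coeff φ).symm
  rw [hrw, map_sum]
  apply MvPolynomial.IsHomogeneous.sum
  intro d hd
  rw [MvPolynomial.pderiv_monomial]
  rcases Nat.eq_zero_or_pos (d i) with h | h
  · rw [h]
    simp only [Nat.cast_zero, mul_zero, map_zero]
    exact MvPolynomial.isHomogeneous_zero _ _ _
  · apply MvPolynomial.isHomogeneous_monomial
    have hdeg : Finsupp.degree d = n := by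
      by_contra hne
      exact (MvPolynomial.mem_support_iff.mp hd) (hφ.coeff_eq_zero hne)
    have hle : Finsupp.single i 1 ≤ d := by
      rw [Finsupp.single_le_iff]; exact h
    have hadd : (d - Finsupp.single i 1) + Finsupp.single i 1 = d := tsub_add_cancel_of_le hle
    have hone : Finsupp.degree (Finsupp.single i 1) = 1 := by
      exact Finsupp.degree_single i 1
    have hdegadd : Finsupp.degree (d - Finsupp.single i 1) + Finsupp.degree (Finsupp.single i 1)
        = Finsupp.degree d := by
      conv_rhs => rw [← hadd]
      simp only [Finsupp.degree_eq_weight_one, map_add]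
    omega

private lemma aeval_int_comm {σ S T : Type*} [CommRing S] [CommRing T] (ψ : S →+* T)
    (x : σ → S) (F : MvPolynomial σ ℤ) :
    ψ (MvPolynomial.aeval x F) = MvPolynomial.aeval (fun j => ψ (x j)) F := by
  rw [MvPolynomial.map_aeval]
  rw [show ψ.comp (algebraMap ℤ S) = algebraMap ℤ T from RingHom.ext_int _ _]
  rw [MvPolynomial.aeval_def, ← MvPolynomial.coe_eval₂Hom]

private lemma paeval_int_comm {S T : Type*} [CommRing S] [CommRing T] (ψ : S →+* T)
    (x : S) (q : Polynomial ℤ) :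
    ψ (Polynomial.aeval x q) = Polynomial.aeval (ψ x) q := by
  rw [Polynomial.aeval_def, Polynomial.aeval_def, Polynomial.hom_eval₂,
    show ψ.comp (algebraMap ℤ S) = algebraMap ℤ T from RingHom.ext_int _ _]

set_option maxHeartbeats 2000000 in
/-- Let `p` be a prime and `F ∈ ℤ[x,y,z]` homogeneous of degree `d ≥ 1`.
If the reduction of `F` modulo `p` defines a smooth plane curve over `𝔽_p` (no nonzero
common zero of it and its partial derivatives in an algebraic closure of `𝔽_p`), then `F`,
regarded over `ℚ`, also defines a smooth plane curve. -/
theorem smooth_of_smooth_reduction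
    (p : ℕ) [Fact p.Prime] (d : ℕ) (hd : 1 ≤ d)
    (F : MvPolynomial (Fin 3) ℤ) (hF : F.IsHomogeneous d)
    (hsmooth : ¬ ∃ a : Fin 3 → AlgebraicClosure (ZMod p), a ≠ 0 ∧
      MvPolynomial.aeval a (MvPolynomial.map (Int.castRingHom (ZMod p)) F) = 0 ∧
      ∀ i : Fin 3, MvPolynomial.aeval a
        (MvPolynomial.pderiv i (MvPolynomial.map (Int.castRingHom (ZMod p)) F)) = 0) :
    ¬ ∃ a : Fin 3 → AlgebraicClosure ℚ, a ≠ 0 ∧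
      MvPolynomial.aeval a (MvPolynomial.map (Int.castRingHom ℚ) F) = 0 ∧
      ∀ i : Fin 3, MvPolynomial.aeval a
        (MvPolynomial.pderiv i (MvPolynomial.map (Int.castRingHom ℚ) F)) = 0 := by
  rintro ⟨a, ha0, hFa, hDa⟩
  apply hsmooth
  have hp : Fact (Nat.Prime p) := ‹_›
  haveI : CharZero (AlgebraicClosure ℚ) := charZero_of_injective_algebraMap (algebraMap ℚ (AlgebraicClosure ℚ)).injective
  -- rewrite hypotheses as ℤ-algebra evaluations
  have hFa' : MvPolynomial.aeval a F = 0 := by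
    rw [show Int.castRingHom ℚ = algebraMap ℤ ℚ from (algebraMap_int_eq ℚ).symm,
      MvPolynomial.aeval_map_algebraMap] at hFa
    exact hFa
  have hDa' : ∀ i, MvPolynomial.aeval a (MvPolynomial.pderiv i F) = 0 := by
    intro i
    have h := hDa i
    rw [MvPolynomial.pderiv_map,
      show Int.castRingHom ℚ = algebraMap ℤ ℚ from (algebraMap_int_eq ℚ).symm,
      MvPolynomial.aeval_map_algebraMap] at h
    exact h
  -- a valuation subring of (AlgebraicClosure ℚ) dominating ℤ localized at p
  set P : Ideal ℤ := Ideal.span {(p : ℤ)} with hPdef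
  haveI hPprime : P.IsPrime := by
    rw [hPdef, Ideal.span_singleton_prime (by exact_mod_cast hp.out.ne_zero)]
    exact Nat.prime_iff_prime_int.mp hp.out
  have hunit : ∀ y : P.primeCompl, IsUnit ((Int.castRingHom (AlgebraicClosure ℚ)) (y : ℤ)) := by
    rintro ⟨y, hy⟩
    have hy0 : y ≠ 0 := fun h => hy (h ▸ P.zero_mem)
    have : ((y : ℤ) : (AlgebraicClosure ℚ)) ≠ 0 := Int.cast_ne_zero.mpr hy0
    simpa using isUnit_iff_ne_zero.mpr this
  set f : Localization.AtPrime P →+* (AlgebraicClosure ℚ) := IsLocalization.lift hunit with hfdef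
  obtain ⟨A, hmemA, hlocA⟩ := IsLocalRing.exists_factor_valuationRing f
  -- p is not a unit in A
  have hpA : ¬ IsUnit ((p : ℕ) : A) := by
    intro hu
    have h1 : (f.codRestrict A.toSubring hmemA) ((p : ℕ) : Localization.AtPrime P)
        = ((p : ℕ) : A) := map_natCast _ p
    have h2 : IsUnit ((p : ℕ) : Localization.AtPrime P) := hlocA.1 _ (h1 ▸ hu)
    have h3 : ((p : ℕ) : Localization.AtPrime P)
        = algebraMap ℤ (Localization.AtPrime P) ((p : ℕ) : ℤ) := by
      rw [map_natCast]
    rw [h3, IsLocalization.AtPrime.isUnit_to_map_iff (Localization.AtPrime P) P] at h2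
    exact h2 (Ideal.subset_span rfl)
  -- residue field has characteristic p
  have hpk : ((p : ℕ) : IsLocalRing.ResidueField A) = 0 := by
    rw [show ((p : ℕ) : IsLocalRing.ResidueField A) = IsLocalRing.residue A ((p : ℕ) : A) from
      (map_natCast _ p).symm, IsLocalRing.residue_eq_zero_iff]
    exact hpA
  haveI : CharP (IsLocalRing.ResidueField A) p :=
    (CharP.charP_iff_prime_eq_zero hp.out).2 hpk
  letI : Algebra (ZMod p) (IsLocalRing.ResidueField A) :=
    ZMod.algebra (IsLocalRing.ResidueField A) p
  -- scaling the point into A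
  obtain ⟨i0, hi0⟩ := Finite.exists_max (fun i => A.valuation (a i))
  have hai0 : a i0 ≠ 0 := by
    obtain ⟨j, hj⟩ := Function.ne_iff.mp ha0
    intro h
    have hle : A.valuation (a j) ≤ 0 := by
      have := hi0 j; rwa [h, map_zero] at this
    exact hj ((A.valuation.zero_iff).mp (le_antisymm hle zero_le'))
  have hvne : A.valuation (a i0) ≠ 0 := A.valuation.ne_zero_iff.mpr hai0
  have hbA : ∀ j, (a i0)⁻¹ * a j ∈ A := by
    intro j
    rw [← A.valuation_le_one_iff, map_mul, map_inv₀]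
    calc (A.valuation (a i0))⁻¹ * A.valuation (a j)
        ≤ (A.valuation (a i0))⁻¹ * A.valuation (a i0) := mul_le_mul_right (hi0 j) _
      _ = 1 := inv_mul_cancel₀ hvne
  set b' : Fin 3 → A := fun j => ⟨(a i0)⁻¹ * a j, hbA j⟩ with hb'def
  have hsub : ∀ j, (A.subtype) (b' j) = ((a i0)⁻¹ • a) j := by
    intro j; simp only [hb'def, Pi.smul_apply, smul_eq_mul]; rfl
  have hinj : Function.Injective (A.subtype) := Subtype.val_injective
  -- evaluations vanish in A
  have key : ∀ (G : MvPolynomial (Fin 3) ℤ) (m : ℕ), G.IsHomogeneous m →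
      MvPolynomial.aeval a G = 0 → MvPolynomial.aeval b' G = 0 := by
    intro G m hGm hGa
    apply hinj
    rw [aeval_int_comm (A.subtype) b' G, map_zero]
    have hfun : (fun j => (A.subtype) (b' j)) = (a i0)⁻¹ • a := funext hsub
    rw [hfun]
    have hQ : MvPolynomial.aeval ((a i0)⁻¹ • a) G
        = (a i0)⁻¹ ^ m * MvPolynomial.aeval a G := by
      rw [MvPolynomial.aeval_def, MvPolynomial.aeval_def,
        MvPolynomial.eval₂_eq_eval_map, MvPolynomial.eval₂_eq_eval_map]
      exact eval_smul_of_isHomogeneous (hGm.map _) _ a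
    exact hQ.trans (by rw [hGa, mul_zero])
  have hb'F : MvPolynomial.aeval b' F = 0 := key F d hF hFa'
  have hb'D : ∀ i, MvPolynomial.aeval b' (MvPolynomial.pderiv i F) = 0 :=
    fun i => key _ (d - 1) (pderiv_isHomogeneous' hF i) (hDa' i)
  -- the residue field is algebraic over ZMod p
  haveI halgk : Algebra.IsAlgebraic (ZMod p) (IsLocalRing.ResidueField A) := by
    constructor
    intro x
    obtain ⟨y, rfl⟩ := IsLocalRing.residue_surjective (R := A) x
    have h1 : IsAlgebraic ℚ ((A.subtype y : AlgebraicClosure ℚ)) :=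
      (AlgebraicClosure.isAlgebraic ℚ).isAlgebraic _
    have halg : IsAlgebraic ℤ ((A.subtype y : AlgebraicClosure ℚ)) :=
      (IsFractionRing.isAlgebraic_iff ℤ ℚ (AlgebraicClosure ℚ)).mpr h1
    obtain ⟨q, hq0, hqy⟩ := halg
    have hq'0 : q.primPart ≠ 0 := q.primPart_ne_zero
    have hq'y : Polynomial.aeval (A.subtype y : AlgebraicClosure ℚ) q.primPart = 0 := by
      have h2 : (Polynomial.aeval (A.subtype y : AlgebraicClosure ℚ))
          (Polynomial.C q.content * q.primPart) = 0 := by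
        rw [← q.eq_C_content_mul_primPart]; exact hqy
      rw [map_mul, Polynomial.aeval_C] at h2
      have hc : (algebraMap ℤ (AlgebraicClosure ℚ)) q.content ≠ 0 := by
        simp only [algebraMap_int_eq, eq_intCast, ne_eq, Int.cast_eq_zero]
        rw [Polynomial.content_eq_zero_iff]
        exact hq0
      exact (mul_eq_zero.mp h2).resolve_left hc
    have hyA : Polynomial.aeval y q.primPart = 0 := by
      apply hinj
      rw [paeval_int_comm A.subtype y q.primPart, map_zero]
      exact hq'y
    have hk : Polynomial.aeval (IsLocalRing.residue A y)
        (q.primPart.map (Int.castRingHom (ZMod p))) = 0 := by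
      have h3 := paeval_int_comm (IsLocalRing.residue A) y q.primPart
      rw [hyA, map_zero] at h3
      rw [Polynomial.aeval_def, Polynomial.eval₂_map,
        show (algebraMap (ZMod p) (IsLocalRing.ResidueField A)).comp (Int.castRingHom (ZMod p))
          = algebraMap ℤ (IsLocalRing.ResidueField A) from RingHom.ext_int _ _,
        ← Polynomial.aeval_def]
      exact h3.symm
    have hmapne : q.primPart.map (Int.castRingHom (ZMod p)) ≠ 0 := by
      intro h
      have hdvd : ∀ n, (p : ℤ) ∣ q.primPart.coeff n := by
        intro n
        have h4 : (q.primPart.map (Int.castRingHom (ZMod p))).coeff n = 0 := by rw [h]; simp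
        rw [Polynomial.coeff_map] at h4
        exact_mod_cast (ZMod.intCast_zmod_eq_zero_iff_dvd _ p).mp h4
      have h5 : (p : ℤ) ∣ q.primPart.content := Finset.dvd_gcd fun n _ => hdvd n
      rw [q.isPrimitive_primPart.content_eq_one] at h5
      exact (Nat.prime_iff_prime_int.mp hp.out).not_isUnit (isUnit_of_dvd_one h5)
    exact ⟨q.primPart.map (Int.castRingHom (ZMod p)), hmapne, hk⟩
  -- embed the residue field into the algebraic closure of ZMod p
  haveI : NoZeroSMulDivisors (ZMod p) (IsLocalRing.ResidueField A) :=
    inferInstance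
  haveI : NoZeroSMulDivisors (ZMod p) (AlgebraicClosure (ZMod p)) :=
    inferInstance
  obtain ⟨ψ⟩ : Nonempty (IsLocalRing.ResidueField A →ₐ[ZMod p] AlgebraicClosure (ZMod p)) :=
    ⟨IsAlgClosed.lift⟩
  let ρ : A →+* AlgebraicClosure (ZMod p) :=
    ψ.toRingHom.comp (IsLocalRing.residue A)
  refine ⟨fun j => ρ (b' j), ?_, ?_, ?_⟩
  · intro h0
    have h1 : ρ (b' i0) = 0 := congrFun h0 i0
    have hb1 : b' i0 = 1 := by
      apply hinj
      show A.subtype (b' i0) = A.subtype 1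
      rw [map_one]
      show (a i0)⁻¹ * a i0 = 1
      exact inv_mul_cancel₀ hai0
    rw [hb1, map_one] at h1
    exact one_ne_zero h1
  · have h1 := aeval_int_comm ρ b' F
    rw [hb'F, map_zero] at h1
    rw [MvPolynomial.aeval_def, MvPolynomial.eval₂_map,
      show (algebraMap (ZMod p) (AlgebraicClosure (ZMod p))).comp (Int.castRingHom (ZMod p))
        = algebraMap ℤ (AlgebraicClosure (ZMod p)) from RingHom.ext_int _ _,
      ← MvPolynomial.aeval_def]
    exact h1.symm
  · intro i
    have h1 := aeval_int_comm ρ b' (MvPolynomial.pderiv i F)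
    rw [hb'D i, map_zero] at h1
    rw [MvPolynomial.pderiv_map, MvPolynomial.aeval_def, MvPolynomial.eval₂_map,
      show (algebraMap (ZMod p) (AlgebraicClosure (ZMod p))).comp (Int.castRingHom (ZMod p))
        = algebraMap ℤ (AlgebraicClosure (ZMod p)) from RingHom.ext_int _ _,
      ← MvPolynomial.aeval_def]
    exact h1.symm
end
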